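/- Let $\sigma, \tau > 0$ and $C_1 > 0$, and suppose vectors $g^j \in \mathbb{R}^n$ (random) satisfy $\mathbb{E}\|g^j - \mu\|^2 \leq C_1 \tau \sigma^2 / 2^j$ for all $j \geq 0$, where $\mu \in \mathbb{R}^n$. Let $Q$ be geometric with $\Pr\{Q=j\}=2^{-j}$, independent of the $g^j$, and define $g_{\mathrm{MLMC}} = g^0 + 2^Q(g^Q - g^{Q-1})\mathbf{1}\{2^Q \leq T_{\max}\}$. Then $\mathbb{E}\|g_{\mathrm{MLMC}} - \mu\|^2 \leq C_1\tau\sigma^2\left(2 + 12\lfloor\log_2 T_{\max}\rfloor\right)$. -/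

import Mathlib

open MeasureTheory

private lemma sq_norm_add_le' {E : Type*} [NormedAddCommGroup E] (a b : E) :
    ‖a + b‖ ^ 2 ≤ 2 * ‖a‖ ^ 2 + 2 * ‖b‖ ^ 2 := by
  have h := norm_add_le a b
  nlinarith [mul_self_le_mul_self (norm_nonneg (a + b)) h, sq_nonneg (‖a‖ - ‖b‖)]

private lemma sq_norm_sub_le' {E : Type*} [NormedAddCommGroup E] (a b m : E) :
    ‖a - b‖ ^ 2 ≤ 2 * ‖a - m‖ ^ 2 + 2 * ‖b - m‖ ^ 2 := by
  have h : ‖a - b‖ ≤ ‖a - m‖ + ‖b - m‖ := by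
    have : a - b = (a - m) - (b - m) := by abel
    rw [this]; exact norm_sub_le _ _
  nlinarith [mul_self_le_mul_self (norm_nonneg (a - b)) h, sq_nonneg (‖a - m‖ - ‖b - m‖)]

theorem stmt18 {Ω : Type*} [MeasurableSpace Ω] (μ : Measure Ω) [IsProbabilityMeasure μ]
    (n : ℕ) (σ τ C1 : ℝ) (hσ : 0 < σ) (hτ : 0 < τ) (hC1 : 0 < C1)
    (g : ℕ → Ω → EuclideanSpace ℝ (Fin n)) (μvec : EuclideanSpace ℝ (Fin n))
    (hgmeas : ∀ j, Measurable (g j))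
    (hgsqint : ∀ j, Integrable (fun ω => ‖g j ω - μvec‖ ^ 2) μ)
    (hglevel : ∀ j, (∫ ω, ‖g j ω - μvec‖ ^ 2 ∂μ) ≤ C1 * τ * σ ^ 2 / 2 ^ j)
    (Q : Ω → ℕ) (hQmeas : Measurable Q)
    (hQlaw : ∀ j, 1 ≤ j → μ {ω | Q ω = j} = ENNReal.ofReal ((2 : ℝ)⁻¹ ^ j))
    (hindep : ProbabilityTheory.IndepFun Q (fun ω => fun j => g j ω) μ)
    (Tmax : ℕ) (hT : 1 ≤ Tmax)
    (hMLMCsqint : Integrable (fun ω =>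
      ‖g 0 ω + (if 2 ^ Q ω ≤ Tmax then ((2 : ℝ) ^ Q ω) • (g (Q ω) ω - g (Q ω - 1) ω) else 0)
        - μvec‖ ^ 2) μ) :
    (∫ ω, ‖g 0 ω + (if 2 ^ Q ω ≤ Tmax then
          ((2 : ℝ) ^ Q ω) • (g (Q ω) ω - g (Q ω - 1) ω) else 0) - μvec‖ ^ 2 ∂μ)
      ≤ C1 * τ * σ ^ 2 * (2 + 12 * (Nat.log 2 Tmax : ℝ)) := by
  classical
  set c : ℝ := C1 * τ * σ ^ 2 with hc_def
  have hc : 0 < c := by positivity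
  set L : ℕ := Nat.log 2 Tmax with hL_def
  set Y : Ω → EuclideanSpace ℝ (Fin n) := fun ω =>
    if 2 ^ Q ω ≤ Tmax then ((2 : ℝ) ^ Q ω) • (g (Q ω) ω - g (Q ω - 1) ω) else 0 with hY_def
  -- condition characterization
  have hcond : ∀ ω, (2 ^ Q ω ≤ Tmax) ↔ Q ω ≤ L := fun ω =>
    (Nat.le_log_iff_pow_le one_lt_two (by omega)).symm
  -- the per-level functions
  set h : ℕ → Ω → ℝ := fun j ω => (4 : ℝ) ^ j * ‖g j ω - g (j - 1) ω‖ ^ 2 with hh_def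
  have hhmeas : ∀ j, Measurable (h j) := by
    intro j
    exact (((hgmeas j).sub (hgmeas (j - 1))).norm.pow_const 2).const_mul _
  have hhnonneg : ∀ j ω, 0 ≤ h j ω := by
    intro j ω; positivity
  have hdiffint : ∀ j, Integrable (fun ω => ‖g j ω - g (j - 1) ω‖ ^ 2) μ := by
    intro j
    refine Integrable.mono' (((hgsqint j).const_mul 2).add ((hgsqint (j - 1)).const_mul 2))
      ((((hgmeas j).sub (hgmeas (j - 1))).norm.pow_const 2)).aestronglyMeasurable
      (Filter.Eventually.of_forall fun ω => ?_)
    rw [Real.norm_of_nonneg (by positivity)]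
    exact sq_norm_sub_le' _ _ _
  have hhint : ∀ j, Integrable (h j) μ := fun j => (hdiffint j).const_mul _
  -- integral of h j
  have hhle : ∀ i : ℕ, (∫ ω, h (i + 1) ω ∂μ) ≤ (4 : ℝ) ^ (i + 1) * (2 * (c / 2 ^ (i + 1)) + 2 * (c / 2 ^ i)) := by
    intro i
    have : (∫ ω, h (i + 1) ω ∂μ) = (4 : ℝ) ^ (i + 1) * ∫ ω, ‖g (i + 1) ω - g i ω‖ ^ 2 ∂μ := by
      simp only [hh_def, Nat.add_sub_cancel]
      rw [integral_const_mul]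
    rw [this]
    have hmono : (∫ ω, ‖g (i + 1) ω - g i ω‖ ^ 2 ∂μ) ≤ 2 * (c / 2 ^ (i + 1)) + 2 * (c / 2 ^ i) := by
      have h1 : (∫ ω, ‖g (i + 1) ω - g i ω‖ ^ 2 ∂μ)
          ≤ ∫ ω, 2 * ‖g (i + 1) ω - μvec‖ ^ 2 + 2 * ‖g i ω - μvec‖ ^ 2 ∂μ := by
        refine integral_mono ?_ (((hgsqint (i + 1)).const_mul 2).add ((hgsqint i).const_mul 2))
          (fun ω => sq_norm_sub_le' _ _ _)
        simpa only [Nat.add_sub_cancel] using hdiffint (i + 1)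
      refine h1.trans ?_
      rw [integral_add ((hgsqint (i + 1)).const_mul 2) ((hgsqint i).const_mul 2),
        integral_const_mul, integral_const_mul]
      have := hglevel (i + 1)
      have := hglevel i
      gcongr <;> assumption
    have h4 : (0:ℝ) ≤ (4 : ℝ) ^ (i + 1) := by positivity
    exact mul_le_mul_of_nonneg_left hmono h4
  -- pointwise decomposition of ‖Y‖²
  have hYsq : ∀ ω, ‖Y ω‖ ^ 2 = ∑ j ∈ Finset.range (L + 1),
      (if Q ω = j then h j ω else 0) := by
    intro ω
    rw [Finset.sum_ite_eq (Finset.range (L + 1)) (Q ω) (fun j => h j ω)]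
    by_cases hle : 2 ^ Q ω ≤ Tmax
    · have hQL : Q ω ∈ Finset.range (L + 1) := by
        simp [Finset.mem_range, Nat.lt_succ_iff, ← hcond ω, hle]
      rw [if_pos hQL]
      simp only [hY_def, if_pos hle, hh_def]
      rw [norm_smul]
      have h2 : ‖(2 : ℝ) ^ Q ω‖ = (2 : ℝ) ^ Q ω := by
        rw [Real.norm_of_nonneg (by positivity)]
      rw [h2, mul_pow]
      congr 1
      rw [← pow_mul, mul_comm, pow_mul]
      norm_num
    · have hQL : Q ω ∉ Finset.range (L + 1) := by
        simp only [Finset.mem_range, Nat.lt_succ_iff]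
        rw [← hcond ω]; exact hle
      rw [if_neg hQL]
      simp [hY_def, if_neg hle]
  -- integrability of each term
  have htermint : ∀ j, Integrable (fun ω => if Q ω = j then h j ω else 0) μ := by
    intro j
    have : (fun ω => if Q ω = j then h j ω else 0)
        = Set.indicator {ω | Q ω = j} (h j) := by
      funext ω; simp [Set.indicator_apply, Set.mem_setOf_eq]
    rw [this]
    exact (hhint j).indicator (hQmeas (measurableSet_singleton j))
  have hYint : Integrable (fun ω => ‖Y ω‖ ^ 2) μ := by
    have : (fun ω => ‖Y ω‖ ^ 2) = fun ω => ∑ j ∈ Finset.range (L + 1),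
        (if Q ω = j then h j ω else 0) := funext hYsq
    rw [this]
    exact integrable_finset_sum _ fun j _ => htermint j
  -- integral of each term via independence
  have hterm : ∀ j, 1 ≤ j → (∫ ω, (if Q ω = j then h j ω else 0) ∂μ)
      = (2 : ℝ)⁻¹ ^ j * ∫ ω, h j ω ∂μ := by
    intro j hj
    have hφ : Measurable (fun q : ℕ => if q = j then (1 : ℝ) else 0) :=
      measurable_from_top
    have hψ : Measurable (fun v : ℕ → EuclideanSpace ℝ (Fin n) =>
        (4 : ℝ) ^ j * ‖v j - v (j - 1)‖ ^ 2) :=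
      (((measurable_pi_apply j).sub (measurable_pi_apply (j - 1))).norm.pow_const 2).const_mul _
    have hind2 := hindep.comp hφ hψ
    have heq : (fun ω => if Q ω = j then h j ω else 0)
        = ((fun q : ℕ => if q = j then (1 : ℝ) else 0) ∘ Q)
          * ((fun v : ℕ → EuclideanSpace ℝ (Fin n) => (4 : ℝ) ^ j * ‖v j - v (j - 1)‖ ^ 2)
            ∘ (fun ω => fun j => g j ω)) := by
      funext ω
      simp only [Pi.mul_apply, Function.comp_apply, hh_def]
      split_ifs <;> simp
    rw [heq, hind2.integral_mul_eq_mul_integral (hφ.comp hQmeas).aestronglyMeasurable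
      (hψ.comp (measurable_pi_lambda _ fun j => hgmeas j)).aestronglyMeasurable]
    have hI1 : (∫ ω, ((fun q : ℕ => if q = j then (1 : ℝ) else 0) ∘ Q) ω ∂μ)
        = (2 : ℝ)⁻¹ ^ j := by
      have : ((fun q : ℕ => if q = j then (1 : ℝ) else 0) ∘ Q)
          = Set.indicator {ω | Q ω = j} (1 : Ω → ℝ) := by
        funext ω; simp [Set.indicator_apply, Set.mem_setOf_eq, Function.comp]
      have hms : MeasurableSet {ω | Q ω = j} := hQmeas (measurableSet_singleton j)
      rw [this, integral_indicator_one hms, measureReal_def, hQlaw j hj,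
        ENNReal.toReal_ofReal (by positivity)]
    rw [hI1]
    congr 1
  -- bound the MLMC integral
  have hmain : (∫ ω, ‖g 0 ω + Y ω - μvec‖ ^ 2 ∂μ)
      ≤ 2 * ∫ ω, ‖g 0 ω - μvec‖ ^ 2 ∂μ + 2 * ∫ ω, ‖Y ω‖ ^ 2 ∂μ := by
    have hstep : (∫ ω, ‖g 0 ω + Y ω - μvec‖ ^ 2 ∂μ)
        ≤ ∫ ω, 2 * ‖g 0 ω - μvec‖ ^ 2 + 2 * ‖Y ω‖ ^ 2 ∂μ := by
      refine integral_mono hMLMCsqint (((hgsqint 0).const_mul 2).add (hYint.const_mul 2))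
        (fun ω => ?_)
      have : g 0 ω + Y ω - μvec = (g 0 ω - μvec) + Y ω := by abel
      rw [this]
      exact sq_norm_add_le' _ _
    refine hstep.trans ?_
    rw [integral_add ((hgsqint 0).const_mul 2) (hYint.const_mul 2),
      integral_const_mul, integral_const_mul]
  -- bound on ∫ ‖Y‖²
  have hYbound : (∫ ω, ‖Y ω‖ ^ 2 ∂μ) ≤ 6 * c * L := by
    have hsplit : (∫ ω, ‖Y ω‖ ^ 2 ∂μ) = ∑ j ∈ Finset.range (L + 1),
        ∫ ω, (if Q ω = j then h j ω else 0) ∂μ := by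
      rw [show (fun ω => ‖Y ω‖ ^ 2) = fun ω => ∑ j ∈ Finset.range (L + 1),
        (if Q ω = j then h j ω else 0) from funext hYsq]
      exact integral_finset_sum _ fun j _ => htermint j
    rw [hsplit, Finset.sum_range_succ']
    have hzero : (∫ ω, (if Q ω = 0 then h 0 ω else 0) ∂μ) = 0 := by
      have : (fun ω => if Q ω = 0 then h 0 ω else 0) = fun _ => (0 : ℝ) := by
        funext ω
        simp [hh_def]
      rw [this, integral_zero]
    rw [hzero, add_zero]
    have hsummand : ∀ i ∈ Finset.range L,
        (∫ ω, (if Q ω = i + 1 then h (i + 1) ω else 0) ∂μ) ≤ 6 * c := by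
      intro i _
      rw [hterm (i + 1) (by omega)]
      have h1 := hhle i
      have h2 : (0:ℝ) ≤ (2 : ℝ)⁻¹ ^ (i + 1) := by positivity
      calc (2 : ℝ)⁻¹ ^ (i + 1) * ∫ ω, h (i + 1) ω ∂μ
          ≤ (2 : ℝ)⁻¹ ^ (i + 1) * ((4 : ℝ) ^ (i + 1) * (2 * (c / 2 ^ (i + 1)) + 2 * (c / 2 ^ i)))
            := mul_le_mul_of_nonneg_left h1 h2
        _ = 6 * c := by
            rw [show (4:ℝ) = 2 * 2 by norm_num, mul_pow, inv_pow, pow_succ]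
            field_simp
            ring
    calc (∑ i ∈ Finset.range L, ∫ ω, (if Q ω = i + 1 then h (i + 1) ω else 0) ∂μ)
        ≤ ∑ _i ∈ Finset.range L, 6 * c := Finset.sum_le_sum hsummand
      _ = 6 * c * L := by rw [Finset.sum_const, Finset.card_range]; ring
  -- conclude
  have hg0 : (∫ ω, ‖g 0 ω - μvec‖ ^ 2 ∂μ) ≤ c := by
    have := hglevel 0
    simpa using this
  calc (∫ ω, ‖g 0 ω + Y ω - μvec‖ ^ 2 ∂μ)
      ≤ 2 * ∫ ω, ‖g 0 ω - μvec‖ ^ 2 ∂μ + 2 * ∫ ω, ‖Y ω‖ ^ 2 ∂μ := hmain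
    _ ≤ 2 * c + 2 * (6 * c * L) := by gcongr
    _ = c * (2 + 12 * (L : ℝ)) := by ring
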